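/- Let N, k, s be positive integers with N > 2s(k+1). Let Φ_{k,s} and Φ_{k,2s} be the circulant matrices of the stencils φ_{k,s} and φ_{k,2s} respectively, and let P_s be the N×N 0-1 shift-sum matrix. Then the multiscale finite-difference operator at scale 2s factors through the one at scale s: Φ_{k,2s} = P_s^{k+1} Φ_{k,s}. -/

import Mathlib

open Finset Matrix Polynomial
open Fin.NatCast Fin.CommRing

/-- The scale-`j` order-`k` multiscale finite-difference stencil, as a vector in `ℝ^N`
(0-indexed by naturals `m < N`). -/
noncomputable def phiR (N k j : ℕ) (m : ℕ) : ℝ :=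
  if m = 0 then (-1 : ℝ) ^ k
  else if m ≤ N - j * (k + 1) then 0
  else (-1 : ℝ) ^ (k + (N - m) / j) * (Nat.choose k ((N - m) / j) : ℝ)

/-- The `N × N` circulant matrix of the stencil `φ_{k,j}`:
`(Φ_{k,j})_{m,n} = (φ_{k,j})_{(m - n) mod N}`. -/
noncomputable def PhiMat (N k j : ℕ) : Matrix (Fin N) (Fin N) ℝ :=
  Matrix.of fun m n => phiR N k j (((m : ℕ) + N - (n : ℕ)) % N)

/-- The `N × N` 0-1 shift-sum matrix `P_s` (0-indexed): entry `(m, n)` is `1` if `n = m`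
or `n = (m + s) mod N`, and `0` otherwise. -/
def Pmat (N s : ℕ) : Matrix (Fin N) (Fin N) ℝ :=
  Matrix.of fun m n =>
    if ((n : ℕ) = (m : ℕ) ∨ (n : ℕ) = ((m : ℕ) + s) % N) then 1 else 0

/-- Elementary cyclic shift matrix. -/
def Emat (N : ℕ) [NeZero N] (a : Fin N) : Matrix (Fin N) (Fin N) ℝ :=
  Matrix.of fun m n => if n = m + a then 1 else 0

section aux

variable {N : ℕ} [NeZero N]

lemma Emat_mul (a b : Fin N) : Emat N a * Emat N b = Emat N (a + b) := by
  ext m n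
  simp only [Emat, Matrix.mul_apply, Matrix.of_apply]
  rw [Finset.sum_eq_single (m + a)]
  · simp [add_assoc]
  · intro t _ ht
    simp only [if_neg ht, zero_mul]
  · simp

lemma Emat_zero : Emat N 0 = 1 := by
  ext m n
  simp [Emat, Matrix.one_apply, eq_comm]

lemma Emat_cast_pow (j i : ℕ) : Emat N ((j * i : ℕ) : Fin N) = (Emat N (j : ℕ)) ^ i := by
  induction i with
  | zero => simp [Emat_zero]
  | succ i ih =>
    rw [Nat.mul_succ, Nat.cast_add, ← Emat_mul, ih, pow_succ]

lemma sum_range_mul_index {M : Type*} [AddCommMonoid M] (f : ℕ → M) (j n : ℕ) :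
    ∑ r ∈ range (j * n), f r = ∑ i ∈ range n, ∑ t ∈ range j, f (j * i + t) := by
  induction n with
  | zero => simp
  | succ n ih =>
    rw [Nat.mul_succ, Finset.sum_range_add, ih, Finset.sum_range_succ]

/-- Entrywise decomposition of `PhiMat` as a sum of shift matrices. -/
lemma Phi_sum (k j : ℕ) (hj : 0 < j) (hjk : j * (k + 1) < N) :
    PhiMat N k j =
      ∑ r ∈ range (j * (k + 1)),
        ((-1 : ℝ) ^ (k + r / j) * (k.choose (r / j) : ℝ)) • Emat N (r : Fin N) := by
  have hN : 0 < N := Nat.pos_of_ne_zero (NeZero.ne N)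
  ext m n
  simp only [Matrix.sum_apply, Matrix.smul_apply, Emat, Matrix.of_apply, smul_eq_mul, mul_ite,
    mul_one, mul_zero]
  set r0 : ℕ := ((n - m : Fin N)).val with hr0
  have hsum : (∑ r ∈ range (j * (k + 1)),
      if n = m + (r : Fin N) then (-1 : ℝ) ^ (k + r / j) * (k.choose (r / j) : ℝ) else 0)
      = if r0 ∈ range (j * (k + 1)) then
          (-1 : ℝ) ^ (k + r0 / j) * (k.choose (r0 / j) : ℝ) else 0 := by
    rw [← Finset.sum_ite_eq' (range (j * (k + 1))) r0
      (fun r => (-1 : ℝ) ^ (k + r / j) * (k.choose (r / j) : ℝ))]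
    refine Finset.sum_congr rfl fun r hr => ?_
    rw [Finset.mem_range] at hr
    have hrN : r < N := lt_trans hr hjk
    have h1 : (n = m + (r : Fin N)) ↔ n - m = (r : Fin N) :=
      ⟨fun he => by rw [he]; ring, fun he => by rw [← he]; ring⟩
    have h2 : (n = m + (r : Fin N)) ↔ r = r0 := by
      rw [h1]
      constructor
      · intro he
        rw [hr0, he, Fin.val_cast_of_lt hrN]
      · intro he
        rw [he, hr0, Fin.cast_val_eq_self]
    simp [h2]
  rw [hsum]
  have hval : ((m : ℕ) + N - (n : ℕ)) % N = ((m - n : Fin N)).val := by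
    rw [Fin.sub_def]
    simp only []
    congr 1
    omega
  have hmn : (m - n : Fin N) = -(n - m) := by ring
  rw [PhiMat, Matrix.of_apply, hval, hmn]
  have hneg : ((-(n - m) : Fin N)).val = (N - r0) % N := by
    rw [Fin.neg_def]
  by_cases h0 : r0 = 0
  · have : (N - r0) % N = 0 := by
      rw [h0]; simp
    rw [hneg, this, phiR]
    have hr0mem : r0 ∈ range (j * (k + 1)) := by
      rw [Finset.mem_range, h0]
      positivity
    rw [if_pos rfl, if_pos hr0mem, h0]
    simp
  · have hr0N : r0 < N := (n - m).isLt
    have hd : (N - r0) % N = N - r0 := Nat.mod_eq_of_lt (by omega)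
    rw [hneg, hd, phiR]
    rw [if_neg (by omega)]
    by_cases hbig : j * (k + 1) ≤ r0
    · rw [if_pos (by omega), if_neg (by rw [Finset.mem_range]; omega)]
    · rw [if_neg (by omega), if_pos (by rw [Finset.mem_range]; omega)]
      rw [show N - (N - r0) = r0 from by omega]


lemma Phi_closed (k j : ℕ) (hj : 0 < j) (hjk : j * (k + 1) < N) :
    PhiMat N k j =
      (∑ i ∈ range (k + 1), ((-1 : ℝ) ^ (k + i) * (k.choose i : ℝ)) • (Emat N (j : Fin N)) ^ i) *
        (∑ t ∈ range j, Emat N (t : Fin N)) := by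
  rw [Phi_sum k j hj hjk, sum_range_mul_index
    (fun r => ((-1 : ℝ) ^ (k + r / j) * (k.choose (r / j) : ℝ)) • Emat N (r : Fin N)) j (k + 1)]
  rw [Finset.sum_mul]
  refine Finset.sum_congr rfl fun i hi => ?_
  rw [smul_mul_assoc, Finset.mul_sum, Finset.smul_sum]
  refine Finset.sum_congr rfl fun t ht => ?_
  rw [Finset.mem_range] at ht
  have hdiv : (j * i + t) / j = i := by
    rw [add_comm, Nat.add_mul_div_left _ _ hj, Nat.div_eq_of_lt ht, zero_add]
  rw [hdiv, Nat.cast_add, ← Emat_mul, Emat_cast_pow]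

lemma Pmat_eq (s : ℕ) (hs : 0 < s) (hsN : s < N) : Pmat N s = 1 + Emat N (s : Fin N) := by
  ext m n
  have hm := m.isLt
  have hn := n.isLt
  have hv : ((m + (s : Fin N) : Fin N) : ℕ) = ((m : ℕ) + s) % N := by
    rw [Fin.add_def, Fin.val_cast_of_lt hsN]
  have hmod : ((m : ℕ) + s) % N = (m : ℕ) + s ∨ ((m : ℕ) + s) % N = (m : ℕ) + s - N := by
    rcases Nat.lt_or_ge ((m : ℕ) + s) N with hlt | hge
    · exact Or.inl (Nat.mod_eq_of_lt hlt)
    · exact Or.inr (by rw [Nat.mod_eq_sub_mod hge, Nat.mod_eq_of_lt (by omega)])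
  have hne : m ≠ m + (s : Fin N) := by
    intro he
    have h2 : (s : Fin N) = 0 := by rwa [left_eq_add] at he
    have h3 : ((s : Fin N) : ℕ) = 0 := by rw [h2]; rfl
    rw [Fin.val_cast_of_lt hsN] at h3
    omega
  simp only [Pmat, Emat, Matrix.add_apply, Matrix.one_apply, Matrix.of_apply]
  have hA : ((n : ℕ) = (m : ℕ)) ↔ n = m := (Fin.ext_iff).symm
  have hB : ((n : ℕ) = ((m : ℕ) + s) % N) ↔ n = m + (s : Fin N) := by
    rw [← hv, ← Fin.ext_iff]
  by_cases h1 : n = m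
  · rw [if_pos (Or.inl (hA.mpr h1)), if_pos h1.symm, if_neg (show ¬n = m + (s : Fin N) from fun hc => hne (h1.symm.trans hc)), add_zero]
  · by_cases h2 : n = m + (s : Fin N)
    · rw [if_pos (Or.inr (hB.mpr h2)), if_neg (fun hc => h1 hc.symm), if_pos h2, zero_add]
    · rw [if_neg ?_, if_neg (fun hc => h1 hc.symm), if_neg h2, add_zero]
      rintro (hc | hc)
      · exact h1 (hA.mp hc)
      · exact h2 (hB.mp hc)

lemma poly_sub_one_pow (p : Polynomial ℝ) (k : ℕ) :
    (p - 1) ^ k =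
      ∑ i ∈ range (k + 1), Polynomial.C ((-1 : ℝ) ^ (k + i) * (k.choose i : ℝ)) * p ^ i := by
  rw [sub_pow]
  refine Finset.sum_congr rfl fun i hi => ?_
  have hC : (Polynomial.C ((-1 : ℝ) ^ (k + i) * (k.choose i : ℝ)))
      = (-1 : Polynomial ℝ) ^ (k + i) * ((k.choose i : ℕ) : Polynomial ℝ) := by
    rw [_root_.map_mul, _root_.map_pow, Polynomial.C_eq_natCast, Polynomial.C_neg,
      Polynomial.C_1]
  rw [hC, one_pow, mul_one, show i + k = k + i from add_comm i k]
  ring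

omit [NeZero N] in
lemma aeval_form (W : Matrix (Fin N) (Fin N) ℝ) (p : Polynomial ℝ) (k : ℕ) :
    Polynomial.aeval W ((p - 1) ^ k) =
      ∑ i ∈ range (k + 1),
        ((-1 : ℝ) ^ (k + i) * (k.choose i : ℝ)) • (Polynomial.aeval W p) ^ i := by
  rw [poly_sub_one_pow, map_sum]
  refine Finset.sum_congr rfl fun i _ => ?_
  rw [_root_.map_mul, _root_.map_pow, Polynomial.aeval_C, Algebra.smul_def]

end aux

theorem PhiMat_double_scale_decomposition (N k s : ℕ) (hN : 0 < N) (hk : 0 < k) (hs : 0 < s)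
    (h : 2 * s * (k + 1) < N) :
    PhiMat N k (2 * s) = (Pmat N s) ^ (k + 1) * PhiMat N k s := by
  haveI : NeZero N := ⟨hN.ne'⟩
  have hsN : s < N := by
    have : s * 1 ≤ s * (2 * (k + 1)) := Nat.mul_le_mul_left _ (by omega)
    have h2 : s ≤ 2 * s * (k + 1) := by
      calc s = s * 1 := (mul_one s).symm
        _ ≤ s * (2 * (k + 1)) := this
        _ = 2 * s * (k + 1) := by ring
    omega
  have hsk : s * (k + 1) < N := by
    have : s * (k + 1) ≤ 2 * s * (k + 1) := Nat.mul_le_mul_right _ (by omega)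
    omega
  set V := Emat N (s : Fin N) with hV
  have hV2 : Emat N ((2 * s : ℕ) : Fin N) = V ^ 2 := by
    rw [show (2 * s) = s * 2 from by ring, Emat_cast_pow]
  have hA2 : (∑ t ∈ range (2 * s), Emat N (t : Fin N))
      = (1 + V) * (∑ t ∈ range s, Emat N (t : Fin N)) := by
    rw [two_mul, Finset.sum_range_add, add_mul, one_mul, Finset.mul_sum]
    congr 1
    refine Finset.sum_congr rfl fun t _ => ?_
    rw [Nat.cast_add, ← Emat_mul]
  rw [Phi_closed k (2 * s) (by omega) h, Phi_closed k s hs hsk, Pmat_eq s hs hsN, hA2, hV2]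
  rw [← mul_assoc, ← mul_assoc]
  congr 1
  have e1 : (∑ i ∈ range (k + 1), ((-1 : ℝ) ^ (k + i) * (k.choose i : ℝ)) • (V ^ 2) ^ i)
      = Polynomial.aeval V (((X : Polynomial ℝ) ^ 2 - 1) ^ k) := by
    rw [aeval_form]
    simp
  have e2 : (∑ i ∈ range (k + 1), ((-1 : ℝ) ^ (k + i) * (k.choose i : ℝ)) • V ^ i)
      = Polynomial.aeval V (((X : Polynomial ℝ) - 1) ^ k) := by
    rw [aeval_form]
    simp
  have e3 : (1 + V) = Polynomial.aeval V ((1 : Polynomial ℝ) + X) := by simp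
  rw [e1, e2, e3, ← _root_.map_pow, ← _root_.map_mul, ← _root_.map_mul]
  congr 1
  rw [show ((X : Polynomial ℝ) ^ 2 - 1) = (1 + X) * (X - 1) from by ring, mul_pow]
  ring
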